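/- Let A be an m × n matrix over the complex numbers. If A is a (q,k,t)-design matrix with k ≤ nt, then rank(A) ≥ n − 6n³t³/k³. -/

import Mathlib

open Finset Matrix
open scoped ComplexOrder

namespace DesignRank

noncomputable def csum (a : Fin m → Fin n → ℝ) (w : Fin m → ℝ) (j : Fin n) : ℝ :=
  ∑ i, w i * a i j

noncomputable def Gfun (a : Fin m → Fin n → ℝ) (σ : ℝ) (w : Fin m → ℝ) : ℝ :=
  σ * ∑ i, Real.log (w i) - ∑ j, Real.log (csum a w j)


lemma deriv_nonneg_of_max {f : ℝ → ℝ} {x₀ v : ℝ} (hx : 0 < x₀)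
    (hf : HasDerivAt f v x₀) (hmax : ∀ x ∈ Set.Ioo 0 x₀, f x ≤ f x₀) : 0 ≤ v := by
  have h := hasDerivAt_iff_tendsto_slope.mp hf
  have h2 : Filter.Tendsto (slope f x₀) (nhdsWithin x₀ (Set.Iio x₀)) (nhds v) :=
    h.mono_left (nhdsWithin_mono _ (by intro y hy; exact ne_of_lt hy))
  refine ge_of_tendsto h2 ?_
  filter_upwards [Ioo_mem_nhdsLT_of_mem ⟨hx, le_refl x₀⟩] with x hx'
  rw [slope_def_field]
  exact div_nonneg_iff.2 <| Or.inr ⟨by linarith [hmax x hx'], by linarith [hx'.2]⟩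

lemma log_csum_ge (a u0 : Fin m → Fin n → ℝ) (ha : ∀ i j, 0 ≤ a i j)
    (hu0 : ∀ i j, 0 ≤ u0 i j)
    (hsupp : ∀ i j, a i j = 0 → u0 i j = 0) (j : Fin n) (hcs : ∑ i, u0 i j = 1)
    (w : Fin m → ℝ) (hw : ∀ i, 0 < w i) :
    ∑ i, u0 i j * Real.log (w i) + ∑ i, u0 i j * Real.log (a i j / u0 i j)
      ≤ Real.log (csum a w j) := by
  classical
  set z : Fin m → ℝ := fun i => if u0 i j = 0 then 0 else w i * a i j / u0 i j with hz
  have hzpos : ∀ i, u0 i j ≠ 0 → 0 < z i := by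
    intro i hi
    have hai : 0 < a i j := by
      rcases (ha i j).lt_or_eq with h | h
      · exact h
      · exact absurd (hsupp i j h.symm) hi
    have : 0 < u0 i j := (hu0 i j).lt_of_ne (Ne.symm hi)
    simp only [hz, if_neg hi]
    exact div_pos (mul_pos (hw i) hai) this
  have hprodpos : 0 < ∏ i, z i ^ (u0 i j) := by
    apply Finset.prod_pos
    intro i _
    by_cases hi : u0 i j = 0
    · simp [hi]
    · exact Real.rpow_pos_of_pos (hzpos i hi) _
  have hAMGM := Real.geom_mean_le_arith_mean_weighted univ (fun i => u0 i j) z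
    (fun i _ => hu0 i j) hcs (fun i _ => by
      by_cases hi : u0 i j = 0
      · simp [hz, hi]
      · exact (hzpos i hi).le)
  have hsum_le : ∑ i, u0 i j * z i ≤ csum a w j := by
    apply Finset.sum_le_sum
    intro i _
    by_cases hi : u0 i j = 0
    · simp [hi]
      exact mul_nonneg (hw i).le (ha i j)
    · simp only [hz, if_neg hi]
      rw [mul_div_assoc', mul_comm (u0 i j), mul_div_assoc, div_self hi, mul_one]
  have h1 : Real.log (∏ i, z i ^ (u0 i j)) ≤ Real.log (csum a w j) :=
    Real.log_le_log hprodpos (hAMGM.trans hsum_le)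
  refine le_trans (le_of_eq ?_) h1
  rw [Real.log_prod (fun i _ => (by
    by_cases hi : u0 i j = 0
    · simp [hi]
    · exact (Real.rpow_pos_of_pos (hzpos i hi) _).ne'))]
  rw [← Finset.sum_add_distrib]
  apply Finset.sum_congr rfl
  intro i _
  by_cases hi : u0 i j = 0
  · simp [hi]
  · rw [Real.log_rpow (hzpos i hi)]
    have hai : a i j ≠ 0 := fun h => hi (hsupp i j h)
    have : z i = w i * (a i j / u0 i j) := by rw [hz]; simp [if_neg hi, mul_div_assoc]
    rw [this, Real.log_mul (hw i).ne' (div_ne_zero hai hi), mul_add]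

lemma G_le (a u0 : Fin m → Fin n → ℝ) (ha : ∀ i j, 0 ≤ a i j)
    (hu0 : ∀ i j, 0 ≤ u0 i j)
    (hsupp : ∀ i j, a i j = 0 → u0 i j = 0) (hcs : ∀ j, ∑ i, u0 i j = 1)
    {σ σ' : ℝ} (hrow : ∀ i, ∑ j, u0 i j ≤ σ') (hσ : σ' ≤ σ)
    (w : Fin m → ℝ) (hw : ∀ i, 0 < w i) (hw1 : ∀ i, w i ≤ 1) (i₀ : Fin m) :
    Gfun a σ w ≤ (- ∑ j, ∑ i, u0 i j * Real.log (a i j / u0 i j))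
      + (σ - σ') * Real.log (w i₀) := by
  have key : ∀ j, ∑ i, u0 i j * Real.log (w i) + ∑ i, u0 i j * Real.log (a i j / u0 i j)
      ≤ Real.log (csum a w j) := fun j => log_csum_ge a u0 ha hu0 hsupp j (hcs j) w hw
  have h1 : Gfun a σ w ≤ σ * ∑ i, Real.log (w i)
      - ∑ j, (∑ i, u0 i j * Real.log (w i) + ∑ i, u0 i j * Real.log (a i j / u0 i j)) := by
    unfold Gfun
    have := Finset.sum_le_sum (fun j (_ : j ∈ univ) => key j)
    linarith
  have h2 : σ * ∑ i, Real.log (w i)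
      - ∑ j, (∑ i, u0 i j * Real.log (w i) + ∑ i, u0 i j * Real.log (a i j / u0 i j))
      = (- ∑ j, ∑ i, u0 i j * Real.log (a i j / u0 i j))
        + ∑ i, (σ - ∑ j, u0 i j) * Real.log (w i) := by
    rw [Finset.sum_add_distrib, Finset.sum_comm (f := fun j i => u0 i j * Real.log (w i))]
    simp only [sub_mul, Finset.sum_sub_distrib, Finset.mul_sum, Finset.sum_mul]
    ring
  have h3 : ∑ i, (σ - ∑ j, u0 i j) * Real.log (w i) ≤ (σ - σ') * Real.log (w i₀) := by
    have hterm : ∀ i, (σ - ∑ j, u0 i j) * Real.log (w i) ≤ 0 := fun i =>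
      mul_nonpos_of_nonneg_of_nonpos (by linarith [hrow i]) (Real.log_nonpos (hw i).le (hw1 i))
    have hi0 : (σ - ∑ j, u0 i₀ j) * Real.log (w i₀) ≤ (σ - σ') * Real.log (w i₀) := by
      apply mul_le_mul_of_nonpos_right (by linarith [hrow i₀])
        (Real.log_nonpos (hw i₀).le (hw1 i₀))
    calc ∑ i, (σ - ∑ j, u0 i j) * Real.log (w i)
        ≤ (σ - ∑ j, u0 i₀ j) * Real.log (w i₀) := by
          rw [← Finset.add_sum_erase _ _ (Finset.mem_univ i₀)]
          have : ∑ i ∈ univ.erase i₀, (σ - ∑ j, u0 i j) * Real.log (w i) ≤ 0 :=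
            Finset.sum_nonpos (fun i _ => hterm i)
          linarith
      _ ≤ (σ - σ') * Real.log (w i₀) := hi0
  linarith [h2 ▸ h1]

lemma csum_pos (a : Fin m → Fin n → ℝ) (ha : ∀ i j, 0 ≤ a i j)
    (w : Fin m → ℝ) (hw : ∀ i, 0 < w i) {j : Fin n} (hj : ∃ i, a i j ≠ 0) :
    0 < csum a w j := by
  obtain ⟨i, hi⟩ := hj
  exact Finset.sum_pos' (fun i _ => mul_nonneg (hw i).le (ha i j))
    ⟨i, Finset.mem_univ i, mul_pos (hw i) ((ha i j).lt_of_ne (Ne.symm hi))⟩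

lemma scaling_exists (a u0 : Fin m → Fin n → ℝ) (ha : ∀ i j, 0 ≤ a i j)
    (hcol : ∀ j, ∃ i, a i j ≠ 0)
    (hu0 : ∀ i j, 0 ≤ u0 i j)
    (hsupp : ∀ i j, a i j = 0 → u0 i j = 0) (hcs : ∀ j, ∑ i, u0 i j = 1)
    {σ σ' : ℝ} (hrow : ∀ i, ∑ j, u0 i j ≤ σ') (hσ : σ' < σ) :
    ∃ w : Fin m → ℝ, (∀ i, 0 < w i) ∧
      (∀ i, ∑ j, w i * a i j / csum a w j ≤ σ) := by
  classical
  set Cb : ℝ := - ∑ j, ∑ i, u0 i j * Real.log (a i j / u0 i j) with hCb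
  set ε : ℝ := σ - σ' with hε
  have hεpos : 0 < ε := by simp [hε]; linarith
  set G1 : ℝ := Gfun a σ (fun _ => 1) with hG1
  set δ : ℝ := min 1 (Real.exp ((G1 - Cb - 1)/ε)) with hδ
  have hδpos : 0 < δ := lt_min one_pos (Real.exp_pos _)
  have hδ1 : δ ≤ 1 := min_le_left _ _
  -- out-of-box bound
  have hout : ∀ w : Fin m → ℝ, (∀ i, 0 < w i) → (∀ i, w i ≤ 1) → ∀ i₀, w i₀ < δ →
      Gfun a σ w < G1 := by
    intro w hw hw1 i₀ hlt
    have h1 := G_le a u0 ha hu0 hsupp hcs hrow hσ.le w hw hw1 i₀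
    have h2 : Real.log (w i₀) < Real.log δ := Real.log_lt_log (hw i₀) hlt
    have h3 : Real.log δ ≤ (G1 - Cb - 1)/ε := by
      rw [Real.log_le_iff_le_exp hδpos]
      exact min_le_right _ _
    have h4 : ε * Real.log (w i₀) < ε * ((G1 - Cb - 1)/ε) :=
      (mul_lt_mul_iff_right₀ hεpos).2 (lt_of_lt_of_le h2 h3)
    rw [mul_div_cancel₀ _ hεpos.ne'] at h4
    calc Gfun a σ w ≤ Cb + ε * Real.log (w i₀) := h1
      _ < Cb + (G1 - Cb - 1) := by linarith
      _ < G1 := by linarith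
  -- compact box and maximizer
  set D : Set (Fin m → ℝ) := Set.Icc (fun _ => δ) (fun _ => 1) with hD
  have hmemD : ∀ w : Fin m → ℝ, w ∈ D ↔ ∀ i, δ ≤ w i ∧ w i ≤ 1 := by
    intro w
    constructor
    · intro h i; exact ⟨h.1 i, h.2 i⟩
    · intro h; exact ⟨fun i => (h i).1, fun i => (h i).2⟩
  have hDne : D.Nonempty := ⟨fun _ => 1, (hmemD _).2 fun i => ⟨hδ1, le_refl 1⟩⟩
  have hcont : ContinuousOn (Gfun a σ) D := by
    apply ContinuousOn.sub
    · apply ContinuousOn.mul continuousOn_const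
      apply continuousOn_finset_sum
      intro i _
      intro w hw
      have hwi : 0 < w i := lt_of_lt_of_le hδpos (((hmemD w).1 hw i).1)
      have : ContinuousAt (fun p : Fin m → ℝ => p i) w := (continuous_apply i).continuousAt
      exact (this.log hwi.ne').continuousWithinAt
    · apply continuousOn_finset_sum
      intro j _
      intro w hw
      have hwpos : ∀ i, 0 < w i := fun i => lt_of_lt_of_le hδpos (((hmemD w).1 hw i).1)
      have hc : 0 < csum a w j := csum_pos a ha w hwpos (hcol j)
      have hcsc : Continuous (fun w : Fin m → ℝ => csum a w j) := by
        unfold csum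
        exact continuous_finset_sum _ (fun i _ => (continuous_apply i).mul continuous_const)
      exact (hcsc.continuousAt.log hc.ne').continuousWithinAt
  obtain ⟨w, hwD, hmax⟩ := isCompact_Icc.exists_isMaxOn hDne hcont
  have hw : ∀ i, 0 < w i := fun i => lt_of_lt_of_le hδpos (((hmemD w).1 hwD i).1)
  have hw1 : ∀ i, w i ≤ 1 := fun i => ((hmemD w).1 hwD i).2
  have hG1w : G1 ≤ Gfun a σ w := hmax ((hmemD _).2 fun i => ⟨hδ1, le_refl 1⟩)
  refine ⟨w, hw, ?_⟩
  intro i₀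
  set x₀ : ℝ := w i₀ with hx₀
  have hx₀pos : 0 < x₀ := hw i₀
  set R : Fin n → ℝ := fun j => ∑ i ∈ univ.erase i₀, w i * a i j with hR
  have hcsum_eq : ∀ j, csum a w j = x₀ * a i₀ j + R j := by
    intro j
    rw [hR, hx₀, csum, ← Finset.add_sum_erase _ _ (Finset.mem_univ i₀)]
  have hcpos : ∀ j, 0 < csum a w j := fun j => csum_pos a ha w hw (hcol j)
  set f : ℝ → ℝ := fun x =>
    σ * (Real.log x + ∑ i ∈ univ.erase i₀, Real.log (w i)) -
      ∑ j, Real.log (x * a i₀ j + R j) with hf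
  have hsum1 : ∀ x : ℝ, ∑ i, Real.log (Function.update w i₀ x i)
      = Real.log x + ∑ i ∈ univ.erase i₀, Real.log (w i) := by
    intro x
    rw [← Finset.add_sum_erase _ (fun i => Real.log (Function.update w i₀ x i))
      (Finset.mem_univ i₀), Function.update_self]
    congr 1
    exact Finset.sum_congr rfl fun i hi => by
      rw [Function.update_of_ne (Finset.mem_erase.1 hi).1]
  have hsum2 : ∀ (x : ℝ) (j : Fin n), csum a (Function.update w i₀ x) j = x * a i₀ j + R j := by
    intro x j
    rw [csum, ← Finset.add_sum_erase _ _ (Finset.mem_univ i₀), Function.update_self]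
    congr 1
    exact Finset.sum_congr rfl fun i hi => by
      rw [Function.update_of_ne (Finset.mem_erase.1 hi).1]
  have hfeq : ∀ x : ℝ, f x = Gfun a σ (Function.update w i₀ x) := by
    intro x
    simp only [hf, Gfun, hsum1, hsum2]
  have hfmax : ∀ x ∈ Set.Ioo 0 x₀, f x ≤ f x₀ := by
    intro x hx
    have hfx₀ : f x₀ = Gfun a σ w := by
      rw [hfeq, hx₀, Function.update_eq_self]
    have hupos : ∀ i, 0 < Function.update w i₀ x i := by
      intro i
      rcases eq_or_ne i i₀ with rfl | hne
      · rw [Function.update_self]; exact hx.1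
      · rw [Function.update_of_ne hne]; exact hw i
    have hule : ∀ i, Function.update w i₀ x i ≤ 1 := by
      intro i
      rcases eq_or_ne i i₀ with rfl | hne
      · rw [Function.update_self]; exact hx.2.le.trans (hw1 _)
      · rw [Function.update_of_ne hne]; exact hw1 i
    rw [hfeq, hfx₀]
    rcases lt_or_ge x δ with hlt | hge
    · have := hout _ hupos hule i₀ (by rwa [Function.update_self])
      linarith
    · apply hmax
      refine (hmemD _).2 fun i => ⟨?_, hule i⟩
      rcases eq_or_ne i i₀ with rfl | hne
      · rwa [Function.update_self]
      · rw [Function.update_of_ne hne]; exact ((hmemD w).1 hwD i).1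
  have hderiv : HasDerivAt f (σ * x₀⁻¹ - ∑ j, a i₀ j / (x₀ * a i₀ j + R j)) x₀ := by
    apply HasDerivAt.sub
    · have h1 : HasDerivAt (fun x : ℝ => Real.log x + ∑ i ∈ univ.erase i₀, Real.log (w i))
          x₀⁻¹ x₀ := (Real.hasDerivAt_log hx₀pos.ne').add_const _
      simpa using h1.const_mul σ
    · apply HasDerivAt.fun_sum
      intro j _
      have hpos : 0 < x₀ * a i₀ j + R j := by rw [← hcsum_eq]; exact hcpos j
      have h1 : HasDerivAt (fun x : ℝ => x * a i₀ j + R j) (a i₀ j) x₀ := by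
        simpa using ((hasDerivAt_id x₀).mul_const (a i₀ j)).add_const (R j)
      simpa using h1.log hpos.ne'
  have hv := deriv_nonneg_of_max hx₀pos hderiv hfmax
  have hT : ∑ j, a i₀ j / (x₀ * a i₀ j + R j) ≤ σ * x₀⁻¹ := by linarith
  have : ∑ j, w i₀ * a i₀ j / csum a w j = x₀ * ∑ j, a i₀ j / (x₀ * a i₀ j + R j) := by
    rw [Finset.mul_sum]
    apply Finset.sum_congr rfl
    intro j _
    rw [hcsum_eq j, hx₀, mul_div_assoc]
  rw [this]
  calc x₀ * ∑ j, a i₀ j / (x₀ * a i₀ j + R j) ≤ x₀ * (σ * x₀⁻¹) :=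
        (mul_le_mul_iff_right₀ hx₀pos).2 hT
    _ = σ := by field_simp

lemma rank_key (B : Matrix (Fin m) (Fin n) ℂ) :
    (RCLike.re (Bᴴ * B).trace)^2
      ≤ (B.rank : ℝ) * ∑ j, ∑ j', Complex.normSq ((Bᴴ * B) j j') := by
  classical
  set M : Matrix (Fin n) (Fin n) ℂ := Bᴴ * B with hMdef
  have hM : M.IsHermitian := Matrix.isHermitian_conjTranspose_mul_self B
  set lam : Fin n → ℝ := hM.eigenvalues with hlam
  set U : Matrix (Fin n) (Fin n) ℂ := (hM.eigenvectorUnitary : Matrix (Fin n) (Fin n) ℂ) with hU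
  have hUU : star U * U = 1 := Unitary.coe_star_mul_self hM.eigenvectorUnitary
  have hspec : M = U * Matrix.diagonal (RCLike.ofReal ∘ lam) * star U := hM.spectral_theorem
  -- trace M = sum of eigenvalues
  have htr : M.trace = ((∑ i, lam i : ℝ) : ℂ) := by
    rw [hspec, Matrix.trace_mul_cycle, hUU, one_mul, Matrix.trace_diagonal]
    push_cast
    rfl
  -- trace (M * M) = sum of squares
  have htr2 : (M * M).trace = ((∑ i, (lam i)^2 : ℝ) : ℂ) := by
    set D : Matrix (Fin n) (Fin n) ℂ := Matrix.diagonal (RCLike.ofReal ∘ lam) with hD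
    have cancel : ∀ Y : Matrix (Fin n) (Fin n) ℂ, star U * (U * Y) = Y := by
      intro Y; rw [← mul_assoc, hUU, one_mul]
    have hMM : M * M = U * (D * D * star U) := by
      rw [hspec]
      simp only [Matrix.mul_assoc]
      rw [cancel]
    rw [hMM, Matrix.trace_mul_comm, mul_assoc, hUU, mul_one, Matrix.trace_mul_comm,
      Matrix.diagonal_mul_diagonal, Matrix.trace_diagonal]
    push_cast
    apply Finset.sum_congr rfl
    intro i _
    simp [pow_two]
  have hfrob : (M * M).trace = ((∑ j, ∑ j', Complex.normSq (M j j') : ℝ) : ℂ) := by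
    rw [Matrix.trace]
    push_cast
    apply Finset.sum_congr rfl
    intro j _
    rw [Matrix.diag, Matrix.mul_apply]
    apply Finset.sum_congr rfl
    intro j' _
    have : M j' j = (starRingEnd ℂ) (M j j') := by
      conv_lhs => rw [← hM]
      rfl
    rw [this, Complex.mul_conj]
  have hrank : B.rank = Fintype.card {i // lam i ≠ 0} := by
    rw [← Matrix.rank_conjTranspose_mul_self B]
    exact hM.rank_eq_card_non_zero_eigs
  -- real identities
  have hre : RCLike.re M.trace = ∑ i, lam i := by rw [htr]; simp
  have hfr : ∑ j, ∑ j', Complex.normSq (M j j') = ∑ i, (lam i)^2 := by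
    have := hfrob.symm.trans htr2
    exact_mod_cast this
  rw [hre, hfr, hrank]
  -- Cauchy-Schwarz
  set s : Finset (Fin n) := univ.filter (fun i => lam i ≠ 0) with hs
  have h1 : ∑ i, lam i = ∑ i ∈ s, lam i := (Finset.sum_filter_ne_zero _).symm
  have h2 : (∑ i ∈ s, lam i)^2 ≤ (s.card : ℝ) * ∑ i ∈ s, (lam i)^2 := by
    exact_mod_cast sq_sum_le_card_mul_sum_sq (s := s) (f := lam)
  have h3 : ∑ i ∈ s, (lam i)^2 ≤ ∑ i, (lam i)^2 :=
    Finset.sum_le_sum_of_subset_of_nonneg (Finset.subset_univ s)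
      (fun i _ _ => sq_nonneg _)
  have h4 : (Fintype.card {i // lam i ≠ 0} : ℝ) = (s.card : ℝ) := by
    rw [hs]; norm_cast; exact Fintype.card_subtype _
  rw [h1, h4]
  calc (∑ i ∈ s, lam i)^2 ≤ (s.card : ℝ) * ∑ i ∈ s, (lam i)^2 := h2
    _ ≤ (s.card : ℝ) * ∑ i, (lam i)^2 := by
        apply mul_le_mul_of_nonneg_left h3 (Nat.cast_nonneg _)

section Design
variable {m n : ℕ}

open scoped Classical in
noncomputable def Sf (A : Matrix (Fin m) (Fin n) ℂ) (j : Fin n) : Finset (Fin m) :=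
  univ.filter (fun i => A i j ≠ 0)

open scoped Classical in
noncomputable def rdeg (A : Matrix (Fin m) (Fin n) ℂ) (i : Fin m) : ℕ :=
  (univ.filter (fun j => A i j ≠ 0)).card

noncomputable def Zf (A : Matrix (Fin m) (Fin n) ℂ) (j : Fin n) : ℝ :=
  ∑ i ∈ Sf A j, ((rdeg A i : ℝ))⁻¹

open scoped Classical in
noncomputable def u0f (A : Matrix (Fin m) (Fin n) ℂ) (i : Fin m) (j : Fin n) : ℝ :=
  if A i j ≠ 0 then ((rdeg A i : ℝ) * Zf A j)⁻¹ else 0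

lemma rdeg_pos {A : Matrix (Fin m) (Fin n) ℂ} {i : Fin m} {j : Fin n}
    (h : i ∈ Sf A j) : 0 < rdeg A i := by
  classical
  rw [Sf, mem_filter] at h
  rw [rdeg, Finset.card_pos]
  exact ⟨j, by simp [h.2]⟩

lemma key1 {A : Matrix (Fin m) (Fin n) ℂ} {t : ℕ}
    (hint : ∀ j j' : Fin n, j ≠ j' → ((Sf A j) ∩ (Sf A j')).card ≤ t) (j : Fin n) :
    ∑ i ∈ Sf A j, ((rdeg A i : ℝ) - 1) ≤ ((n : ℝ) - 1) * t := by
  classical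
  have hstep : ∀ i ∈ Sf A j,
      ((rdeg A i : ℝ) - 1) = (((univ.erase j).filter (fun j' => A i j' ≠ 0)).card : ℝ) := by
    intro i hi
    have hj : j ∈ univ.filter (fun j' => A i j' ≠ 0) := by
      rw [Sf, mem_filter] at hi
      simp only [mem_filter, mem_univ, true_and]
      exact hi.2
    have h1 : ((univ.filter (fun j' => A i j' ≠ 0)).erase j).card = rdeg A i - 1 := by
      rw [Finset.card_erase_of_mem hj, rdeg]
    have h2 : (univ.filter (fun j' => A i j' ≠ 0)).erase j
        = (univ.erase j).filter (fun j' => A i j' ≠ 0) := by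
      ext x; simp [and_comm, and_assoc, and_left_comm]
    rw [← h2, h1, Nat.cast_sub (rdeg_pos hi)]
    simp
  rw [Finset.sum_congr rfl hstep]
  have hswap : ∑ i ∈ Sf A j, (((univ.erase j).filter (fun j' => A i j' ≠ 0)).card : ℝ)
      = ∑ j' ∈ univ.erase j, (((Sf A j) ∩ (Sf A j')).card : ℝ) := by
    push_cast
    have h1 : ∀ i ∈ Sf A j, (((univ.erase j).filter (fun j' => A i j' ≠ 0)).card : ℝ)
        = ∑ j' ∈ univ.erase j, if A i j' ≠ 0 then (1:ℝ) else 0 := by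
      intro i _
      rw [Finset.card_filter]
      push_cast
      apply Finset.sum_congr rfl
      intro j' _
      split <;> simp
    rw [Finset.sum_congr rfl h1, Finset.sum_comm]
    apply Finset.sum_congr rfl
    intro j' _
    have : (Sf A j) ∩ (Sf A j') = (Sf A j).filter (fun i => A i j' ≠ 0) := by
      ext i; simp [Sf]
    rw [this, Finset.card_filter]
    push_cast
    apply Finset.sum_congr rfl
    intro i _
    split <;> simp
  rw [hswap]
  have hn : 1 ≤ n := by
    have := j.2; omega
  calc ∑ j' ∈ univ.erase j, (((Sf A j) ∩ (Sf A j')).card : ℝ)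
      ≤ ∑ j' ∈ univ.erase j, (t : ℝ) := by
        apply Finset.sum_le_sum
        intro j' hj'
        exact_mod_cast hint j j' (Ne.symm (Finset.mem_erase.1 hj').1)
    _ = ((n : ℝ) - 1) * t := by
        rw [Finset.sum_const, Finset.card_erase_of_mem (mem_univ j), Finset.card_univ]
        simp only [Fintype.card_fin, nsmul_eq_mul]
        rw [Nat.cast_sub hn]
        simp

lemma Zf_lb {A : Matrix (Fin m) (Fin n) ℂ} {k t : ℕ} (hk : 0 < k)
    (hcol : ∀ j, k ≤ (Sf A j).card)
    (hint : ∀ j j' : Fin n, j ≠ j' → ((Sf A j) ∩ (Sf A j')).card ≤ t) (j : Fin n) :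
    (k : ℝ)^2 / (2 * ((k : ℝ) + (2 * (((n : ℝ) - 1) * t) + 1))) ≤ Zf A j := by
  classical
  set T : ℝ := ((n : ℝ) - 1) * t with hT
  have hn : 1 ≤ n := by have := j.2; omega
  have hT0 : 0 ≤ T := by
    apply mul_nonneg _ (Nat.cast_nonneg t)
    have : (1:ℝ) ≤ (n:ℝ) := by exact_mod_cast hn
    linarith
  set θ : ℝ := 2 * T + 1 with hθ
  have hθpos : 0 < θ := by linarith
  have hkr : (0:ℝ) < k := by exact_mod_cast hk
  set good : Finset (Fin m) := (Sf A j).filter (fun i => ((rdeg A i : ℝ) - 1) * k ≤ θ) with hgood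
  set bad : Finset (Fin m) := (Sf A j).filter (fun i => ¬ (((rdeg A i : ℝ) - 1) * k ≤ θ)) with hbad
  have hcards : good.card + bad.card = (Sf A j).card := Finset.card_filter_add_card_filter_not _
  have hr1 : ∀ i ∈ Sf A j, (0:ℝ) ≤ (rdeg A i : ℝ) - 1 := by
    intro i hi
    have := rdeg_pos hi
    have : (1:ℝ) ≤ (rdeg A i : ℝ) := by exact_mod_cast this
    linarith
  have hbadsum : (bad.card : ℝ) * θ ≤ T * k := by
    have h1 : (bad.card : ℝ) * θ = ∑ _i ∈ bad, θ := by rw [Finset.sum_const]; ring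
    have h2 : ∑ _i ∈ bad, θ ≤ ∑ i ∈ bad, ((rdeg A i : ℝ) - 1) * k := by
      apply Finset.sum_le_sum
      intro i hi
      rw [hbad, mem_filter] at hi
      exact (not_le.1 hi.2).le
    have h3 : ∑ i ∈ bad, ((rdeg A i : ℝ) - 1) * k ≤ ∑ i ∈ Sf A j, ((rdeg A i : ℝ) - 1) * k := by
      apply Finset.sum_le_sum_of_subset_of_nonneg (Finset.filter_subset _ _)
      intro i hi _
      exact mul_nonneg (hr1 i hi) hkr.le
    have h4 : ∑ i ∈ Sf A j, ((rdeg A i : ℝ) - 1) * k ≤ T * k := by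
      rw [← Finset.sum_mul]
      exact mul_le_mul_of_nonneg_right (key1 hint j) hkr.le
    linarith
  have hbadcard : (bad.card : ℝ) ≤ k / 2 := by
    have h2 : 2 * T * k ≤ θ * k := by
      rw [hθ]; nlinarith
    nlinarith [hbadsum, hθpos]
  have hgoodcard : (k : ℝ) / 2 ≤ (good.card : ℝ) := by
    have hc : (good.card : ℝ) + (bad.card : ℝ) = ((Sf A j).card : ℝ) := by exact_mod_cast hcards
    have hcol' : (k : ℝ) ≤ ((Sf A j).card : ℝ) := by exact_mod_cast hcol j
    linarith
  have hterm : ∀ i ∈ good, (k : ℝ) / ((k : ℝ) + θ) ≤ ((rdeg A i : ℝ))⁻¹ := by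
    intro i hi
    rw [hgood, mem_filter] at hi
    have hrpos : (0:ℝ) < (rdeg A i : ℝ) := by exact_mod_cast rdeg_pos hi.1
    rw [inv_eq_one_div, div_le_div_iff₀ (by linarith) hrpos]
    nlinarith [hi.2]
  calc (k : ℝ)^2 / (2 * ((k : ℝ) + θ)) = ((k:ℝ)/2) * ((k:ℝ)/((k:ℝ)+θ)) := by
        field_simp
    _ ≤ (good.card : ℝ) * ((k:ℝ)/((k:ℝ)+θ)) := by
        apply mul_le_mul_of_nonneg_right (by linarith) (by positivity)
    _ ≤ ∑ i ∈ good, ((rdeg A i : ℝ))⁻¹ := by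
        have := Finset.card_nsmul_le_sum good (fun i => ((rdeg A i : ℝ))⁻¹)
          ((k:ℝ)/((k:ℝ)+θ)) hterm
        simpa [nsmul_eq_mul] using this
    _ ≤ Zf A j := by
        apply Finset.sum_le_sum_of_subset_of_nonneg (Finset.filter_subset _ _)
        intro i _ _
        positivity

lemma Zf_pos {A : Matrix (Fin m) (Fin n) ℂ} {k t : ℕ} (hk : 0 < k)
    (hcol : ∀ j, k ≤ (Sf A j).card)
    (hint : ∀ j j' : Fin n, j ≠ j' → ((Sf A j) ∩ (Sf A j')).card ≤ t) (j : Fin n) :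
    0 < Zf A j := by
  have h := Zf_lb hk hcol hint j
  have hn : 1 ≤ n := by have := j.2; omega
  have hT0 : (0:ℝ) ≤ ((n : ℝ) - 1) * t := by
    apply mul_nonneg _ (Nat.cast_nonneg t)
    have : (1:ℝ) ≤ (n:ℝ) := by exact_mod_cast hn
    linarith
  have hkr : (0:ℝ) < k := by exact_mod_cast hk
  calc (0:ℝ) < (k : ℝ)^2 / (2 * ((k : ℝ) + (2 * (((n : ℝ) - 1) * t) + 1))) := by positivity
    _ ≤ Zf A j := h

lemma u0f_nonneg (A : Matrix (Fin m) (Fin n) ℂ) {k t : ℕ} (hk : 0 < k)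
    (hcol : ∀ j, k ≤ (Sf A j).card)
    (hint : ∀ j j' : Fin n, j ≠ j' → ((Sf A j) ∩ (Sf A j')).card ≤ t)
    (i : Fin m) (j : Fin n) : 0 ≤ u0f A i j := by
  rw [u0f]
  split
  · have hZ := Zf_pos hk hcol hint j
    positivity
  · exact le_refl 0

lemma u0f_supp (A : Matrix (Fin m) (Fin n) ℂ) (i : Fin m) (j : Fin n)
    (h : A i j = 0) : u0f A i j = 0 := by
  rw [u0f, if_neg (by simpa using h)]

lemma u0f_colsum (A : Matrix (Fin m) (Fin n) ℂ) {k t : ℕ} (hk : 0 < k)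
    (hcol : ∀ j, k ≤ (Sf A j).card)
    (hint : ∀ j j' : Fin n, j ≠ j' → ((Sf A j) ∩ (Sf A j')).card ≤ t)
    (j : Fin n) : ∑ i, u0f A i j = 1 := by
  classical
  have hZ := Zf_pos hk hcol hint j
  have h1 : ∑ i, u0f A i j = ∑ i ∈ Sf A j, ((rdeg A i : ℝ) * Zf A j)⁻¹ := by
    rw [Sf, Finset.sum_filter]
    apply Finset.sum_congr rfl
    intro i _
    rw [u0f]
  rw [h1]
  have h2 : ∀ i ∈ Sf A j, ((rdeg A i : ℝ) * Zf A j)⁻¹ = ((rdeg A i : ℝ))⁻¹ * (Zf A j)⁻¹ :=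
    fun i _ => by rw [mul_inv]
  rw [Finset.sum_congr rfl h2, ← Finset.sum_mul, ← Zf]
  exact mul_inv_cancel₀ hZ.ne'

lemma u0f_rowsum (A : Matrix (Fin m) (Fin n) ℂ) {k t : ℕ} (hk : 0 < k)
    (hcol : ∀ j, k ≤ (Sf A j).card)
    (hint : ∀ j j' : Fin n, j ≠ j' → ((Sf A j) ∩ (Sf A j')).card ≤ t)
    (hn : 1 ≤ n) (i : Fin m) :
    ∑ j, u0f A i j ≤ 2 * ((k : ℝ) + (2 * (((n : ℝ) - 1) * t) + 1)) / (k : ℝ)^2 := by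
  classical
  set σ' : ℝ := 2 * ((k : ℝ) + (2 * (((n : ℝ) - 1) * t) + 1)) / (k : ℝ)^2 with hσ'
  have hkr : (0:ℝ) < k := by exact_mod_cast hk
  have h1 : ∑ j, u0f A i j = ∑ j ∈ univ.filter (fun j => A i j ≠ 0),
      ((rdeg A i : ℝ) * Zf A j)⁻¹ := by
    rw [Finset.sum_filter]
    apply Finset.sum_congr rfl
    intro j _
    rw [u0f]
  rcases Finset.eq_empty_or_nonempty (univ.filter (fun j => A i j ≠ 0)) with he | hne
  · rw [h1, he, Finset.sum_empty]
    have hT0 : (0:ℝ) ≤ ((n : ℝ) - 1) * t := by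
      apply mul_nonneg _ (Nat.cast_nonneg t)
      have : (1:ℝ) ≤ (n:ℝ) := by exact_mod_cast hn
      linarith
    rw [hσ']
    positivity
  · obtain ⟨j₀, hj₀⟩ := hne
    have hion : 1 ≤ n := by have := j₀.2; omega
    have hrpos : 0 < rdeg A i := by
      rw [rdeg, Finset.card_pos]
      exact ⟨j₀, hj₀⟩
    have hrposR : (0:ℝ) < (rdeg A i : ℝ) := by exact_mod_cast hrpos
    have hterm : ∀ j ∈ univ.filter (fun j => A i j ≠ 0),
        ((rdeg A i : ℝ) * Zf A j)⁻¹ ≤ ((rdeg A i : ℝ))⁻¹ * σ' := by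
      intro j _
      rw [mul_inv]
      apply mul_le_mul_of_nonneg_left _ (by positivity)
      have hZl := Zf_lb hk hcol hint j
      have hZp := Zf_pos hk hcol hint j
      have hbase : (0:ℝ) < (k : ℝ)^2 / (2 * ((k : ℝ) + (2 * (((n : ℝ) - 1) * t) + 1))) := by
        have hT0 : (0:ℝ) ≤ ((n : ℝ) - 1) * t := by
          apply mul_nonneg _ (Nat.cast_nonneg t)
          have : (1:ℝ) ≤ (n:ℝ) := by exact_mod_cast hion
          linarith
        positivity
      calc (Zf A j)⁻¹ ≤ ((k : ℝ)^2 / (2 * ((k : ℝ) + (2 * (((n : ℝ) - 1) * t) + 1))))⁻¹ :=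
            inv_anti₀ hbase hZl
        _ = σ' := by rw [hσ', inv_div]
    calc ∑ j, u0f A i j ≤ ∑ j ∈ univ.filter (fun j => A i j ≠ 0),
          ((rdeg A i : ℝ))⁻¹ * σ' := by
          rw [h1]; exact Finset.sum_le_sum hterm
      _ = (rdeg A i : ℝ) * (((rdeg A i : ℝ))⁻¹ * σ') := by
          rw [Finset.sum_const, ← rdeg, nsmul_eq_mul]
      _ = σ' := by field_simp
end Design

lemma pair_bound {A B : Matrix (Fin m) (Fin n) ℂ} {t : ℕ} (u : Fin m → Fin n → ℝ)
    (hu : ∀ i j, Complex.normSq (B i j) = u i j)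
    (hBsupp : ∀ i j, A i j = 0 → B i j = 0)
    {j j' : Fin n}
    (hI : ((Sf A j) ∩ (Sf A j')).card ≤ t) :
    Complex.normSq ((Bᴴ * B) j j') ≤ (t : ℝ) * ∑ i, u i j * u i j' := by
  classical
  set I := (Sf A j) ∩ (Sf A j') with hIdef
  have hM : (Bᴴ * B) j j' = ∑ i ∈ I, (starRingEnd ℂ) (B i j) * B i j' := by
    rw [Matrix.mul_apply]
    rw [← Finset.sum_subset (Finset.subset_univ I) ?van]
    · exact Finset.sum_congr rfl fun i _ => by rw [Matrix.conjTranspose_apply]; rfl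
    case van =>
      intro i _ hni
      have : A i j = 0 ∨ A i j' = 0 := by
        by_contra hc
        push_neg at hc
        exact hni (by simp [hIdef, Sf, hc.1, hc.2])
      rcases this with h | h
      · rw [Matrix.conjTranspose_apply, hBsupp i j h]; simp
      · rw [hBsupp i j' h]; simp
  have habs : ‖(Bᴴ * B) j j'‖
      ≤ ∑ i ∈ I, ‖B i j‖ * ‖B i j'‖ := by
    rw [hM]
    refine le_trans (norm_sum_le _ _) ?_
    apply Finset.sum_le_sum
    intro i _
    rw [norm_mul, Complex.norm_conj]
  have h1 : Complex.normSq ((Bᴴ * B) j j')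
      ≤ (∑ i ∈ I, ‖B i j‖ * ‖B i j'‖)^2 := by
    rw [← Complex.sq_norm]
    exact pow_le_pow_left₀ (norm_nonneg _) habs 2
  have h2 : (∑ i ∈ I, ‖B i j‖ * ‖B i j'‖)^2
      ≤ (I.card : ℝ) * ∑ i ∈ I, (‖B i j‖ * ‖B i j'‖)^2 := by
    exact sq_sum_le_card_mul_sum_sq (s := I) (f := fun i => ‖B i j‖ * ‖B i j'‖)
  have h3 : ∀ i, (‖B i j‖ * ‖B i j'‖)^2 = u i j * u i j' := by
    intro i
    rw [mul_pow, Complex.sq_norm, Complex.sq_norm, hu, hu]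
  have h4 : ∑ i ∈ I, (‖B i j‖ * ‖B i j'‖)^2 ≤ ∑ i, u i j * u i j' := by
    rw [Finset.sum_congr rfl (fun i _ => h3 i)]
    apply Finset.sum_le_sum_of_subset_of_nonneg (Finset.subset_univ I)
    intro i _ _
    rw [← hu, ← hu]
    exact mul_nonneg (Complex.normSq_nonneg _) (Complex.normSq_nonneg _)
  have h5 : (I.card : ℝ) ≤ (t : ℝ) := by exact_mod_cast hI
  have hsum_nonneg : (0:ℝ) ≤ ∑ i ∈ I, (‖B i j‖ * ‖B i j'‖)^2 :=
    Finset.sum_nonneg fun i _ => sq_nonneg _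
  calc Complex.normSq ((Bᴴ * B) j j')
      ≤ (I.card : ℝ) * ∑ i ∈ I, (‖B i j‖ * ‖B i j'‖)^2 := h1.trans h2
    _ ≤ (t : ℝ) * ∑ i ∈ I, (‖B i j‖ * ‖B i j'‖)^2 :=
        mul_le_mul_of_nonneg_right h5 hsum_nonneg
    _ ≤ (t : ℝ) * ∑ i, u i j * u i j' := by
        apply mul_le_mul_of_nonneg_left h4 (Nat.cast_nonneg t)

end DesignRank

/-- An `m × n` matrix `A` over a field is a `(q,k,t)`-design matrix if every row has
support of size at most `q`, every column has support of size at least `k`, and the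
supports of any two distinct columns intersect in at most `t` coordinates. -/
def IsDesignMatrix {F : Type*} [Field F] {m n : ℕ}
    (A : Matrix (Fin m) (Fin n) F) (q k t : ℕ) : Prop :=
  (∀ i : Fin m, {j : Fin n | A i j ≠ 0}.ncard ≤ q) ∧
  (∀ j : Fin n, k ≤ {i : Fin m | A i j ≠ 0}.ncard) ∧
  (∀ j₁ j₂ : Fin n, j₁ ≠ j₂ →
    ({i : Fin m | A i j₁ ≠ 0} ∩ {i : Fin m | A i j₂ ≠ 0}).ncard ≤ t)

open DesignRank

theorem rank_of_design_matrix_average_q_no_m {m n q k t : ℕ} (hk : 0 < k) (hkt : k ≤ n * t)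
    (A : Matrix (Fin m) (Fin n) ℂ) (hA : IsDesignMatrix A q k t) :
    (n : ℝ) - 6 * (n : ℝ) ^ 3 * (t : ℝ) ^ 3 / (k : ℝ) ^ 3 ≤ (A.rank : ℝ) := by
  classical
  obtain ⟨-, hcol0, hint0⟩ := hA
  have hn1 : 1 ≤ n := by
    rcases Nat.eq_zero_or_pos n with h | h
    · subst h; simp at hkt; omega
    · exact h
  have ht1 : 1 ≤ t := by
    rcases Nat.eq_zero_or_pos t with h | h
    · subst h; simp at hkt; omega
    · exact h
  have hcol : ∀ j, k ≤ (Sf A j).card := by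
    intro j
    have he : {i : Fin m | A i j ≠ 0}.ncard = (Sf A j).card := by
      rw [Set.ncard_eq_toFinset_card']
      congr 1
      ext i
      simp [Sf]
    have h := hcol0 j
    omega
  have hint : ∀ j j' : Fin n, j ≠ j' → ((Sf A j) ∩ (Sf A j')).card ≤ t := by
    intro j j' hne
    have he : ({i : Fin m | A i j ≠ 0} ∩ {i : Fin m | A i j' ≠ 0}).ncard
        = ((Sf A j) ∩ (Sf A j')).card := by
      rw [Set.ncard_eq_toFinset_card']
      congr 1
      ext i
      simp [Sf]
    have h := hint0 j j' hne
    omega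
  set a : Fin m → Fin n → ℝ := fun i j => Complex.normSq (A i j) with ha_def
  have ha : ∀ i j, 0 ≤ a i j := fun i j => Complex.normSq_nonneg _
  have hazero : ∀ i j, a i j = 0 ↔ A i j = 0 := fun i j => Complex.normSq_eq_zero
  have hcole : ∀ j, ∃ i, a i j ≠ 0 := by
    intro j
    obtain ⟨i, hi⟩ := Finset.card_pos.1 (lt_of_lt_of_le hk (hcol j))
    have hAij : A i j ≠ 0 := by
      have := hi
      rw [Sf, mem_filter] at this
      exact this.2
    exact ⟨i, fun h => hAij ((hazero i j).1 h)⟩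
  -- real constants
  have hnr : (1:ℝ) ≤ (n:ℝ) := by exact_mod_cast hn1
  have htr1 : (1:ℝ) ≤ (t:ℝ) := by exact_mod_cast ht1
  have hkr1 : (1:ℝ) ≤ (k:ℝ) := by exact_mod_cast hk
  have hkr0 : (0:ℝ) < (k:ℝ) := by linarith
  have hktr : (k:ℝ) ≤ (n:ℝ) * (t:ℝ) := by exact_mod_cast hkt
  have hσ'σ : 2 * ((k : ℝ) + (2 * (((n : ℝ) - 1) * t) + 1)) / (k : ℝ)^2
      < 6 * (n:ℝ)^2 * (t:ℝ)^2 / (k:ℝ)^3 := by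
    rw [div_lt_div_iff₀ (by positivity) (by positivity)]
    have hP : 2 * ((k : ℝ) + (2 * (((n : ℝ) - 1) * t) + 1)) * (k:ℝ)
        < 6 * (n:ℝ)^2 * (t:ℝ)^2 := by
      nlinarith [mul_le_mul hktr hktr (by linarith) (by positivity),
        mul_le_mul_of_nonneg_right hktr
          (mul_nonneg (by linarith) (by positivity) : (0:ℝ) ≤ ((n:ℝ)-1) * t),
        mul_le_mul_of_nonneg_left htr1 (by positivity : (0:ℝ) ≤ (n:ℝ) * t)]
    calc 2 * ((k : ℝ) + (2 * (((n : ℝ) - 1) * t) + 1)) * (k:ℝ)^3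
        = (2 * ((k : ℝ) + (2 * (((n : ℝ) - 1) * t) + 1)) * (k:ℝ)) * (k:ℝ)^2 := by ring
      _ < (6 * (n:ℝ)^2 * (t:ℝ)^2) * (k:ℝ)^2 := by
          apply mul_lt_mul_of_pos_right hP (by positivity)
  -- scaling
  obtain ⟨w, hw, hsrow⟩ := scaling_exists a (u0f A) ha hcole
    (u0f_nonneg A hk hcol hint) (fun i j h => u0f_supp A i j ((hazero i j).1 h))
    (u0f_colsum A hk hcol hint) (fun i => u0f_rowsum A hk hcol hint hn1 i) hσ'σ
  have hcpos : ∀ j, 0 < csum a w j := fun j => csum_pos a ha w hw (hcole j)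
  set B : Matrix (Fin m) (Fin n) ℂ := Matrix.of
    (fun i j => ((Real.sqrt (w i) * (Real.sqrt (csum a w j))⁻¹ : ℝ) : ℂ) * A i j) with hB_def
  have hnormB : ∀ i j, Complex.normSq (B i j) = w i * a i j / csum a w j := by
    intro i j
    have h1 : Real.sqrt (w i) * Real.sqrt (w i) = w i := Real.mul_self_sqrt (hw i).le
    have h2 : Real.sqrt (csum a w j) * Real.sqrt (csum a w j) = csum a w j :=
      Real.mul_self_sqrt (hcpos j).le
    have hsc : Real.sqrt (csum a w j) ≠ 0 := by
      have := hcpos j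
      positivity
    have h3 : (Real.sqrt (w i) * (Real.sqrt (csum a w j))⁻¹)
        * (Real.sqrt (w i) * (Real.sqrt (csum a w j))⁻¹) = w i / csum a w j := by
      rw [mul_mul_mul_comm, h1, ← mul_inv, h2, div_eq_mul_inv]
    have haij : a i j = Complex.normSq (A i j) := rfl
    show Complex.normSq (((Real.sqrt (w i) * (Real.sqrt (csum a w j))⁻¹ : ℝ) : ℂ) * A i j) = _
    rw [Complex.normSq_mul, Complex.normSq_ofReal, h3, haij]
    ring
  have hBsupp : ∀ i j, A i j = 0 → B i j = 0 := by
    intro i j h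
    show ((Real.sqrt (w i) * (Real.sqrt (csum a w j))⁻¹ : ℝ) : ℂ) * A i j = 0
    rw [h, mul_zero]
  have hrankBA : (B.rank : ℝ) ≤ (A.rank : ℝ) := by
    have hfac : B = (Matrix.diagonal fun i => ((Real.sqrt (w i) : ℝ) : ℂ)) * A
        * Matrix.diagonal (fun j => (((Real.sqrt (csum a w j))⁻¹ : ℝ) : ℂ)) := by
      ext i j
      rw [Matrix.mul_diagonal, Matrix.diagonal_mul]
      show ((Real.sqrt (w i) * (Real.sqrt (csum a w j))⁻¹ : ℝ) : ℂ) * A i j = _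
      push_cast
      ring
    have : B.rank ≤ A.rank := by
      rw [hfac]
      exact le_trans (Matrix.rank_mul_le_left _ _) (Matrix.rank_mul_le_right _ _)
    exact_mod_cast this
  set M : Matrix (Fin n) (Fin n) ℂ := Bᴴ * B with hM_def
  have hMapply : ∀ j j', M j j' = ∑ i, (starRingEnd ℂ) (B i j) * B i j' := by
    intro j j'
    rw [hM_def, Matrix.mul_apply]
    exact Finset.sum_congr rfl fun i _ => by rw [Matrix.conjTranspose_apply]; rfl
  have hucolsum : ∀ j, ∑ i, w i * a i j / csum a w j = 1 := by
    intro j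
    rw [← Finset.sum_div]
    exact div_self (hcpos j).ne'
  have hdiag : ∀ j, M j j = 1 := by
    intro j
    rw [hMapply]
    have : ∀ i, (starRingEnd ℂ) (B i j) * B i j
        = ((w i * a i j / csum a w j : ℝ) : ℂ) := by
      intro i
      rw [← Complex.normSq_eq_conj_mul_self, hnormB]
    rw [Finset.sum_congr rfl fun i _ => this i, ← Complex.ofReal_sum, hucolsum]
    simp
  have htrace : RCLike.re M.trace = (n : ℝ) := by
    rw [Matrix.trace]
    have : ∀ j, M.diag j = 1 := fun j => hdiag j
    rw [Finset.sum_congr rfl fun j _ => this j]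
    simp
  -- sum bounds
  have hu_nonneg : ∀ i j, 0 ≤ w i * a i j / csum a w j := by
    intro i j
    have := hcpos j
    have := hw i
    have := ha i j
    positivity
  have hs_le : ∀ i, ∑ j, w i * a i j / csum a w j
      ≤ 6 * (n:ℝ)^2 * (t:ℝ)^2 / (k:ℝ)^3 := fun i => hsrow i
  have hs_nonneg : ∀ i, 0 ≤ ∑ j, w i * a i j / csum a w j :=
    fun i => Finset.sum_nonneg fun j _ => hu_nonneg i j
  have hsum_s : ∑ i, ∑ j, w i * a i j / csum a w j = (n : ℝ) := by
    rw [Finset.sum_comm]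
    rw [Finset.sum_congr rfl fun j _ => hucolsum j]
    simp
  have hE : ∑ j, ∑ j' ∈ univ.erase j, Complex.normSq (M j j')
      ≤ (t:ℝ) * (6 * (n:ℝ)^2 * (t:ℝ)^2 / (k:ℝ)^3 * (n:ℝ)) := by
    have hp : ∀ j, ∀ j' ∈ univ.erase j, Complex.normSq (M j j')
        ≤ (t:ℝ) * ∑ i, (w i * a i j / csum a w j) * (w i * a i j' / csum a w j') := by
      intro j j' hj'
      have hne : j ≠ j' := fun h => (Finset.mem_erase.1 hj').1 h.symm
      exact pair_bound (fun i j => w i * a i j / csum a w j) hnormB hBsupp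
        (hint j j' hne)
    calc ∑ j, ∑ j' ∈ univ.erase j, Complex.normSq (M j j')
        ≤ ∑ j, ∑ j' ∈ univ.erase j,
            (t:ℝ) * ∑ i, (w i * a i j / csum a w j) * (w i * a i j' / csum a w j') := by
          apply Finset.sum_le_sum
          intro j _
          exact Finset.sum_le_sum (hp j)
      _ = (t:ℝ) * ∑ j, ∑ j' ∈ univ.erase j,
            ∑ i, (w i * a i j / csum a w j) * (w i * a i j' / csum a w j') := by
          rw [Finset.mul_sum]
          exact Finset.sum_congr rfl fun j _ => by rw [Finset.mul_sum]
      _ ≤ (t:ℝ) * (6 * (n:ℝ)^2 * (t:ℝ)^2 / (k:ℝ)^3 * (n:ℝ)) := by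
          apply mul_le_mul_of_nonneg_left _ (Nat.cast_nonneg t)
          have hinner : ∀ j, ∑ j' ∈ univ.erase j,
              ∑ i, (w i * a i j / csum a w j) * (w i * a i j' / csum a w j')
              = ∑ i, (w i * a i j / csum a w j) * ∑ j' ∈ univ.erase j,
                  (w i * a i j' / csum a w j') := by
            intro j
            rw [Finset.sum_comm]
            exact Finset.sum_congr rfl fun i _ => by rw [Finset.mul_sum]
          rw [Finset.sum_congr rfl fun j _ => hinner j, Finset.sum_comm]
          have hper : ∀ i, ∑ j, (w i * a i j / csum a w j) * ∑ j' ∈ univ.erase j,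
              (w i * a i j' / csum a w j')
              ≤ 6 * (n:ℝ)^2 * (t:ℝ)^2 / (k:ℝ)^3 * ∑ j, w i * a i j / csum a w j := by
            intro i
            calc ∑ j, (w i * a i j / csum a w j) * ∑ j' ∈ univ.erase j,
                  (w i * a i j' / csum a w j')
                ≤ ∑ j, (w i * a i j / csum a w j) *
                    ∑ j', (w i * a i j' / csum a w j') := by
                  apply Finset.sum_le_sum
                  intro j _
                  apply mul_le_mul_of_nonneg_left _ (hu_nonneg i j)
                  apply Finset.sum_le_sum_of_subset_of_nonneg
                    (Finset.subset_univ _) (fun j' _ _ => hu_nonneg i j')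
              _ = (∑ j, w i * a i j / csum a w j) * ∑ j', (w i * a i j' / csum a w j') := by
                  rw [← Finset.sum_mul]
              _ ≤ 6 * (n:ℝ)^2 * (t:ℝ)^2 / (k:ℝ)^3 * ∑ j, w i * a i j / csum a w j := by
                  apply mul_le_mul_of_nonneg_right (hs_le i) (hs_nonneg i)
          calc ∑ i, ∑ j, (w i * a i j / csum a w j) * ∑ j' ∈ univ.erase j,
                (w i * a i j' / csum a w j')
              ≤ ∑ i, 6 * (n:ℝ)^2 * (t:ℝ)^2 / (k:ℝ)^3 * ∑ j, w i * a i j / csum a w j :=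
                Finset.sum_le_sum fun i _ => hper i
            _ = 6 * (n:ℝ)^2 * (t:ℝ)^2 / (k:ℝ)^3 * (n:ℝ) := by
                rw [← Finset.mul_sum, hsum_s]
  -- final spectral inequality
  have hkey := rank_key B
  rw [← hM_def, htrace] at hkey
  have hF2 : ∑ j, ∑ j', Complex.normSq (M j j')
      ≤ (n:ℝ) + (t:ℝ) * (6 * (n:ℝ)^2 * (t:ℝ)^2 / (k:ℝ)^3 * (n:ℝ)) := by
    have hsplitj : ∀ j, ∑ j', Complex.normSq (M j j')
        = 1 + ∑ j' ∈ univ.erase j, Complex.normSq (M j j') := by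
      intro j
      rw [← Finset.add_sum_erase _ _ (Finset.mem_univ j), hdiag]
      simp
    rw [Finset.sum_congr rfl fun j _ => hsplitj j, Finset.sum_add_distrib]
    simp only [Finset.sum_const, Finset.card_univ, Fintype.card_fin, nsmul_eq_mul, mul_one]
    linarith [hE]
  set X : ℝ := 6 * (n : ℝ) ^ 3 * (t : ℝ) ^ 3 / (k : ℝ) ^ 3 with hX_def
  have hXeq : (t:ℝ) * (6 * (n:ℝ)^2 * (t:ℝ)^2 / (k:ℝ)^3 * (n:ℝ)) = X := by
    rw [hX_def]
    field_simp
  have hX0 : 0 ≤ X := by rw [hX_def]; positivity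
  have h1 : (n:ℝ)^2 ≤ (B.rank : ℝ) * ((n:ℝ) + X) := by
    calc (n:ℝ)^2 ≤ (B.rank : ℝ) * ∑ j, ∑ j', Complex.normSq (M j j') := hkey
      _ ≤ (B.rank : ℝ) * ((n:ℝ) + X) := by
          apply mul_le_mul_of_nonneg_left _ (Nat.cast_nonneg _)
          rw [← hXeq]
          exact hF2
  have hpos : (0:ℝ) < (n:ℝ) + X := by linarith
  have h3 : (n:ℝ) - X ≤ (B.rank : ℝ) := by
    have h2 : ((n:ℝ) - X) * ((n:ℝ) + X) ≤ (n:ℝ)^2 := by nlinarith [sq_nonneg X]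
    exact (mul_le_mul_iff_left₀ hpos).1 (h2.trans h1)
  linarith [hrankBA]
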